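/- Let Δ be a finite nonempty pure simplicial complex all of whose facets have cardinality n. Then the impartial strong placement game G(Δ) is equivalent to 0 if n is even and equivalent to * if n is odd. -/

import Mathlib

universe u

namespace SetTheory

/-- Pre-games (formerly `SetTheory.PGame` in Mathlib, since removed): a game is given by
types of left and right moves and the resulting games. -/
inductive PGame : Type (u + 1)
  | mk : ∀ α β : Type u, (α → PGame) → (β → PGame) → PGame

namespace PGame

/-- The pair `(x ≤ y, x ⧏ y)`, by recursion on `x` and then on `y`, as in the former Mathlib:
`x ≤ y ↔ (∀ i, xL i ⧏ y) ∧ (∀ j, x ⧏ yR j)` and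
`x ⧏ y ↔ (∃ j, x ≤ yL j) ∨ (∃ i, xR i ≤ y)`. -/
noncomputable def leLF : PGame.{u} → PGame.{u} → Prop × Prop :=
  fun x => PGame.rec (motive := fun _ => PGame.{u} → Prop × Prop)
    (fun xl xr xL xR IHL IHR => fun y =>
      PGame.rec (motive := fun _ => Prop × Prop)
        (fun yl yr yL yR JHL JHR =>
          ((∀ i, (IHL i (mk yl yr yL yR)).2) ∧ ∀ j, (JHR j).2,
            (∃ j, (JHL j).1) ∨ ∃ i, (IHR i (mk yl yr yL yR)).1)) y) x

/-- The order on pre-games (formerly `SetTheory.PGame.le`). -/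
noncomputable instance : LE PGame.{u} :=
  ⟨fun x y => (leLF x y).1⟩

/-- Equivalence of pre-games (formerly `SetTheory.PGame.Equiv`): `x ≤ y ∧ y ≤ x`. -/
instance : HasEquiv PGame.{u} :=
  ⟨fun x y => x ≤ y ∧ y ≤ x⟩

/-- The pre-game `0 = {|}`. -/
instance : Zero PGame.{u} :=
  ⟨⟨PEmpty, PEmpty, PEmpty.elim, PEmpty.elim⟩⟩

/-- The pre-game `star = {0|0}`. -/
def star : PGame.{u} :=
  ⟨PUnit, PUnit, fun _ => 0, fun _ => 0⟩

end PGame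

end SetTheory

open SetTheory PGame
open scoped PGame

variable {V : Type} [DecidableEq V]

/-- A (finite) simplicial complex: a downward-closed family of finite sets of vertices. -/
def IsComplex (Δ : Finset (Finset V)) : Prop :=
  ∀ F ∈ Δ, ∀ F' ⊆ F, F' ∈ Δ

/-- `F` is a facet (maximal face) of `Δ`. -/
def IsFacet (Δ : Finset (Finset V)) (F : Finset V) : Prop :=
  F ∈ Δ ∧ ∀ F' ∈ Δ, F ⊆ F' → F = F'

/-- The link of a vertex `v` in `Δ`: faces `F` with `v ∉ F` and `F ∪ {v} ∈ Δ`. -/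
def linkC (Δ : Finset (Finset V)) (v : V) : Finset (Finset V) :=
  Δ.filter fun F => v ∉ F ∧ insert v F ∈ Δ

theorem linkC_sup_lt (Δ : Finset (Finset V)) (v : V) (hv : {v} ∈ Δ) :
    (linkC Δ v).sup Finset.card < Δ.sup Finset.card := by
  have h1 : (1 : ℕ) ≤ Δ.sup Finset.card := by
    simpa using Finset.le_sup (f := Finset.card) hv
  refine (Finset.sup_lt_iff (by simp only [bot_eq_zero]; omega)).2 ?_
  intro F hF
  simp only [linkC, Finset.mem_filter] at hF
  obtain ⟨-, hvF, hins⟩ := hF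
  have h2 := Finset.le_sup (f := Finset.card) hins
  rw [Finset.card_insert_of_notMem hvF] at h2
  omega

/-- The impartial strong placement game of a simplicial complex: both players' moves are to
the links of the vertices of `Δ`. -/
def SPGame (Δ : Finset (Finset V)) : PGame :=
  ⟨{v : V // {v} ∈ Δ}, {v : V // {v} ∈ Δ},
    fun v => SPGame (linkC Δ v.1), fun v => SPGame (linkC Δ v.1)⟩
termination_by Δ.sup Finset.card
decreasing_by all_goals exact linkC_sup_lt Δ v.1 v.2

theorem SPGame_def (Δ : Finset (Finset V)) :
    SPGame Δ = ⟨{v : V // {v} ∈ Δ}, {v : V // {v} ∈ Δ},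
      fun v => SPGame (linkC Δ v.1), fun v => SPGame (linkC Δ v.1)⟩ := by
  rw [SPGame]

theorem linkC_isComplex {Δ : Finset (Finset V)} (hΔ : IsComplex Δ) (v : V) :
    IsComplex (linkC Δ v) := by
  intro F hF F' hF'
  simp only [linkC, Finset.mem_filter] at hF ⊢
  obtain ⟨hFΔ, hvF, hins⟩ := hF
  exact ⟨hΔ F hFΔ F' hF', fun hvF' => hvF (hF' hvF'),
    hΔ _ hins _ (Finset.insert_subset_insert v hF')⟩

theorem exists_facet {Δ : Finset (Finset V)} {F : Finset V} (hF : F ∈ Δ) :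
    ∃ G, IsFacet Δ G ∧ F ⊆ G := by
  obtain ⟨G, hG, hmax⟩ :=
    Finset.exists_max_image (Δ.filter (F ⊆ ·)) Finset.card ⟨F, by simp [hF]⟩
  simp only [Finset.mem_filter] at hG
  refine ⟨G, ⟨hG.1, fun F' hF' hsub => Finset.eq_of_subset_of_card_le hsub ?_⟩, hG.2⟩
  exact hmax F' (Finset.mem_filter.2 ⟨hF', hG.2.trans hsub⟩)

theorem linkC_nonempty {Δ : Finset (Finset V)} (hΔ : IsComplex Δ) {v : V}
    (hv : {v} ∈ Δ) : (linkC Δ v).Nonempty := by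
  refine ⟨∅, ?_⟩
  simp only [linkC, Finset.mem_filter]
  exact ⟨hΔ _ hv _ (Finset.empty_subset _), by simp, by simpa using hv⟩

theorem linkC_pure {Δ : Finset (Finset V)} {n : ℕ} (hΔ : IsComplex Δ)
    (hpure : ∀ F : Finset V, IsFacet Δ F → F.card = n) {v : V} (hv : {v} ∈ Δ) :
    ∀ F : Finset V, IsFacet (linkC Δ v) F → F.card = n - 1 := by
  intro F hF
  obtain ⟨hFlink, hFmax⟩ := hF
  simp only [linkC, Finset.mem_filter] at hFlink
  obtain ⟨hFΔ, hvF, hins⟩ := hFlink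
  obtain ⟨G, hG, hsub⟩ := exists_facet hins
  have hvG : v ∈ G := hsub (Finset.mem_insert_self v F)
  have hFG : F ⊆ G.erase v := fun x hx =>
    Finset.mem_erase.2 ⟨fun h => hvF (h ▸ hx), hsub (Finset.mem_insert_of_mem hx)⟩
  have herase : G.erase v ∈ linkC Δ v := by
    simp only [linkC, Finset.mem_filter]
    refine ⟨hΔ G hG.1 _ (Finset.erase_subset v G), Finset.notMem_erase v G, ?_⟩
    rw [Finset.insert_erase hvG]; exact hG.1
  rw [hFmax _ herase hFG, Finset.card_erase_of_mem hvG, hpure G hG]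

theorem zero_def' : (0 : PGame.{u}) = PGame.mk PEmpty PEmpty PEmpty.elim PEmpty.elim := rfl

theorem star_def' : PGame.star.{u} = PGame.mk PUnit PUnit (fun _ => 0) (fun _ => 0) := rfl

theorem SPGame_le_iff (Δ : Finset (Finset V)) (yl yr : Type) (yL : yl → PGame) (yR : yr → PGame) :
    SPGame Δ ≤ PGame.mk yl yr yL yR ↔
      (∀ i : {v : V // {v} ∈ Δ}, (leLF (SPGame (linkC Δ i.1)) (PGame.mk yl yr yL yR)).2) ∧
        ∀ j, (leLF (SPGame Δ) (yR j)).2 := by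
  rw [SPGame_def]
  exact Iff.rfl

theorem SPGame_lf_iff (Δ : Finset (Finset V)) (yl yr : Type) (yL : yl → PGame) (yR : yr → PGame) :
    (leLF (SPGame Δ) (PGame.mk yl yr yL yR)).2 ↔
      (∃ j, SPGame Δ ≤ yL j) ∨
        ∃ i : {v : V // {v} ∈ Δ}, SPGame (linkC Δ i.1) ≤ PGame.mk yl yr yL yR := by
  rw [SPGame_def]
  exact Iff.rfl

theorem le_SPGame_iff (Δ : Finset (Finset V)) (xl xr : Type) (xL : xl → PGame) (xR : xr → PGame) :
    PGame.mk xl xr xL xR ≤ SPGame Δ ↔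
      (∀ i, (leLF (xL i) (SPGame Δ)).2) ∧
        ∀ j : {v : V // {v} ∈ Δ}, (leLF (PGame.mk xl xr xL xR) (SPGame (linkC Δ j.1))).2 := by
  rw [SPGame_def]
  exact Iff.rfl

theorem lf_SPGame_iff (Δ : Finset (Finset V)) (xl xr : Type) (xL : xl → PGame) (xR : xr → PGame) :
    (leLF (PGame.mk xl xr xL xR) (SPGame Δ)).2 ↔
      (∃ j : {v : V // {v} ∈ Δ}, PGame.mk xl xr xL xR ≤ SPGame (linkC Δ j.1)) ∨
        ∃ i, xR i ≤ SPGame Δ := by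
  rw [SPGame_def]
  exact Iff.rfl

theorem exists_vertex {Δ : Finset (Finset V)} (hΔ : IsComplex Δ) (hne : Δ.Nonempty) {n : ℕ}
    (hpure : ∀ F : Finset V, IsFacet Δ F → F.card = n) (hn : 1 ≤ n) : ∃ v, {v} ∈ Δ := by
  obtain ⟨F, hF⟩ := hne
  obtain ⟨G, hG, -⟩ := exists_facet hF
  have hcard := hpure G hG
  obtain ⟨v, hvG⟩ : G.Nonempty := Finset.card_pos.1 (by omega)
  exact ⟨v, hΔ G hG.1 {v} (Finset.singleton_subset_iff.2 hvG)⟩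

theorem no_vertex {Δ : Finset (Finset V)} (hpure : ∀ F : Finset V, IsFacet Δ F → F.card = 0)
    (v : V) (hv : {v} ∈ Δ) : False := by
  obtain ⟨G, hG, hsub⟩ := exists_facet hv
  have hc := hpure G hG
  have hvG : v ∈ G := hsub (Finset.mem_singleton_self v)
  simp [Finset.card_eq_zero.1 hc] at hvG

theorem even_aux (k : ℕ) : ∀ Δ : Finset (Finset V), IsComplex Δ → Δ.Nonempty →
    (∀ F : Finset V, IsFacet Δ F → F.card = 2 * k) → SPGame Δ ≤ 0 ∧ 0 ≤ SPGame Δ := by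
  induction k with
  | zero =>
    intro Δ hΔ hne hpure
    have hp0 : ∀ F : Finset V, IsFacet Δ F → F.card = 0 := fun F hF => by
      rw [hpure F hF]
    rw [zero_def']
    exact ⟨(SPGame_le_iff _ _ _ _ _).2 ⟨fun i => (no_vertex hp0 i.1 i.2).elim, fun j => j.elim⟩,
      (le_SPGame_iff _ _ _ _ _).2 ⟨fun i => i.elim, fun j => (no_vertex hp0 j.1 j.2).elim⟩⟩
  | succ k ih =>
    intro Δ hΔ hne hpure
    have child : ∀ v : {v : V // {v} ∈ Δ}, ∃ w, {w} ∈ linkC Δ v.1 ∧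
        (SPGame (linkC (linkC Δ v.1) w) ≤ 0 ∧ 0 ≤ SPGame (linkC (linkC Δ v.1) w)) := by
      intro v
      have h1 := linkC_pure hΔ hpure v.2
      obtain ⟨w, hw⟩ := exists_vertex (linkC_isComplex hΔ v.1) (linkC_nonempty hΔ v.2) h1
        (by omega)
      refine ⟨w, hw, ih _ (linkC_isComplex (linkC_isComplex hΔ v.1) w)
        (linkC_nonempty (linkC_isComplex hΔ v.1) hw) ?_⟩
      have h2 := linkC_pure (linkC_isComplex hΔ v.1) h1 hw
      intro F hF
      rw [h2 F hF]
      omega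
    rw [zero_def']
    constructor
    · refine (SPGame_le_iff _ _ _ _ _).2 ⟨fun i => ?_, fun j => j.elim⟩
      obtain ⟨w, hw, hle, -⟩ := child i
      exact (SPGame_lf_iff _ _ _ _ _).2 (Or.inr ⟨⟨w, hw⟩, hle⟩)
    · refine (le_SPGame_iff _ _ _ _ _).2 ⟨fun i => i.elim, fun j => ?_⟩
      obtain ⟨w, hw, -, hle⟩ := child j
      exact (lf_SPGame_iff _ _ _ _ _).2 (Or.inl ⟨⟨w, hw⟩, hle⟩)

theorem odd_aux (k : ℕ) (Δ : Finset (Finset V)) (hΔ : IsComplex Δ) (hne : Δ.Nonempty)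
    (hpure : ∀ F : Finset V, IsFacet Δ F → F.card = 2 * k + 1) :
    SPGame Δ ≤ PGame.star ∧ PGame.star ≤ SPGame Δ := by
  have child : ∀ v : {v : V // {v} ∈ Δ},
      SPGame (linkC Δ v.1) ≤ 0 ∧ 0 ≤ SPGame (linkC Δ v.1) := fun v =>
    even_aux k _ (linkC_isComplex hΔ v.1) (linkC_nonempty hΔ v.2)
      (by simpa using linkC_pure hΔ hpure v.2)
  obtain ⟨v, hv⟩ := exists_vertex hΔ hne hpure (by omega)
  rw [star_def']
  constructor
  · refine (SPGame_le_iff _ _ _ _ _).2 ⟨fun i => ?_, fun j => ?_⟩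
    · exact (SPGame_lf_iff _ _ _ _ _).2 (Or.inl ⟨PUnit.unit, (child i).1⟩)
    · show (leLF (SPGame Δ) (PGame.mk PEmpty PEmpty PEmpty.elim PEmpty.elim)).2
      exact (SPGame_lf_iff _ _ _ _ _).2 (Or.inr ⟨⟨v, hv⟩, (child _).1⟩)
  · refine (le_SPGame_iff _ _ _ _ _).2 ⟨fun i => ?_, fun j => ?_⟩
    · show (leLF (PGame.mk PEmpty PEmpty PEmpty.elim PEmpty.elim) (SPGame Δ)).2
      exact (lf_SPGame_iff _ _ _ _ _).2 (Or.inl ⟨⟨v, hv⟩, (child _).2⟩)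
    · exact (lf_SPGame_iff _ _ _ _ _).2 (Or.inr ⟨PUnit.unit, (child j).2⟩)

/-- If `Δ` is a nonempty pure simplicial complex all of whose facets have cardinality `n`,
then its impartial strong placement game is equivalent to `0` if `n` is even and to `*`
if `n` is odd. -/
theorem spGame_of_pure (Δ : Finset (Finset V)) (n : ℕ) (hΔ : IsComplex Δ)
    (hne : Δ.Nonempty) (hpure : ∀ F : Finset V, IsFacet Δ F → F.card = n) :
    (Even n → SPGame Δ ≈ 0) ∧ (Odd n → SPGame Δ ≈ star) := by
  refine ⟨fun h => ?_, fun h => ?_⟩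
  · obtain ⟨k, hk⟩ := h
    exact even_aux k Δ hΔ hne (fun F hF => by rw [hpure F hF]; omega)
  · obtain ⟨k, hk⟩ := h
    exact odd_aux k Δ hΔ hne (fun F hF => by rw [hpure F hF]; omega)
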